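/- Let f be a piecewise contracting interval map with D ⊂ X̃, let x ∈ X̃ and i ∈ {1,...,N-1}. If c_i is left-right recurrently visited by the orbit of x (i.e. c_i ∈ Δ_lr(x)), then c_i, d_i^+ and d_i^- belong to ω(x), and moreover the closures of the orbits of d_i^- and d_i^+ are contained in ω(x). -/

import Mathlib

open Filter Topology Set

/-- A piecewise contracting interval map on `X = [c 0, c N]` with contraction pieces
`X_i` delimited by the points `c 0 < c 1 < … < c N`, contraction rate `lam ∈ (0,1)`,
and `fe i` the (unique) continuous `lam`-Lipschitz extension of `f` restricted to the
`i`-th piece to its closure `[c (i-1), c i]`. The pieces are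
`X_1 = [c 0, c 1)`, `X_i = (c (i-1), c i)` for `1 < i < N`, `X_N = (c (N-1), c N]`. -/
structure PCIM where
  N : ℕ
  hN : 2 ≤ N
  c : ℕ → ℝ
  lam : ℝ
  f : ℝ → ℝ
  fe : ℕ → ℝ → ℝ
  hc : StrictMonoOn c (Set.Iic N)
  hlam : lam ∈ Set.Ioo (0 : ℝ) 1
  hmap : Set.MapsTo f (Set.Icc (c 0) (c N)) (Set.Icc (c 0) (c N))
  hfe_lip : ∀ i, 1 ≤ i → i ≤ N →
    ∀ x ∈ Set.Icc (c (i - 1)) (c i), ∀ y ∈ Set.Icc (c (i - 1)) (c i),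
      |fe i x - fe i y| ≤ lam * |x - y|
  hfe_eq : ∀ i, 1 ≤ i → i ≤ N → ∀ x ∈ Set.Ioo (c (i - 1)) (c i), fe i x = f x
  hfe_left : fe 1 (c 0) = f (c 0)
  hfe_right : fe N (c N) = f (c N)

namespace PCIM

variable (P : PCIM)

/-- The phase space `X = [c 0, c N]`. -/
def X : Set ℝ := Set.Icc (P.c 0) (P.c P.N)

/-- The `i`-th contraction piece (`1 ≤ i ≤ N`). -/
def piece (i : ℕ) : Set ℝ :=
  Set.Ioo (P.c (i - 1)) (P.c i)
    ∪ (if i = 1 then {P.c 0} else (∅ : Set ℝ))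
    ∪ (if i = P.N then {P.c P.N} else (∅ : Set ℝ))

/-- `Δ`, the set of interior boundary points of the pieces. -/
def Δ : Set ℝ := {y | ∃ i, 1 ≤ i ∧ i < P.N ∧ y = P.c i}

/-- `X̃ = ⋂ n, f⁻ⁿ(X \ Δ)`: points whose whole forward orbit stays in `X` and avoids `Δ`. -/
def Xt : Set ℝ := {x | ∀ n : ℕ, P.f^[n] x ∈ P.X \ P.Δ}

/-- Forward orbit of `x`. -/
def orbit (x : ℝ) : Set ℝ := Set.range fun n : ℕ => P.f^[n] x

/-- The ω-limit set of `x`: limits of subsequences of the forward orbit. -/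
def omega (x : ℝ) : Set ℝ :=
  {y | ∃ φ : ℕ → ℕ, StrictMono φ ∧
    Filter.Tendsto (fun n => P.f^[φ n] x) Filter.atTop (nhds y)}

/-- `d_i^- = f_i (c_i)`, the left lateral limit of `f` at `c i`. -/
def dminus (i : ℕ) : ℝ := P.fe i (P.c i)

/-- `d_i^+ = f_{i+1} (c_i)`, the right lateral limit of `f` at `c i`. -/
def dplus (i : ℕ) : ℝ := P.fe (i + 1) (P.c i)

/-- `D⁻ = {d_1^-, …, d_{N-1}^-}`. -/
def Dminus : Set ℝ := {y | ∃ i, 1 ≤ i ∧ i < P.N ∧ y = P.dminus i}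

/-- `D⁺ = {d_1^+, …, d_{N-1}^+}`. -/
def Dplus : Set ℝ := {y | ∃ i, 1 ≤ i ∧ i < P.N ∧ y = P.dplus i}

/-- `D`, the set of all one-sided limits of `f` at endpoints of the pieces. -/
def D : Set ℝ := P.Dminus ∪ P.Dplus ∪ {P.fe 1 (P.c 0), P.fe P.N (P.c P.N)}

/-- `A` is pseudo-invariant: for every `x ∈ A` at least one one-sided limit of `f`
at `x` (i.e. some `fe i x` with `x` in the closure of the `i`-th piece) belongs to `A`. -/
def PseudoInvariant (A : Set ℝ) : Prop :=
  ∀ x ∈ A, ∃ i, 1 ≤ i ∧ i ≤ P.N ∧ x ∈ Set.Icc (P.c (i - 1)) (P.c i) ∧ P.fe i x ∈ A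

/-- `F_i(A) = closure (f (A ∩ X_i))`. -/
def Fmap (i : ℕ) (A : Set ℝ) : Set ℝ := closure (P.f '' (A ∩ P.piece i))

/-- For a word `w = [i_1, …, i_n]`, the set `F_{i_n} ∘ … ∘ F_{i_1} (X)`. -/
def atomOf (w : List ℕ) : Set ℝ := w.foldl (fun S i => P.Fmap i S) P.X

/-- `A` is an atom of generation `n`. -/
def IsAtomGen (n : ℕ) (A : Set ℝ) : Prop :=
  ∃ w : List ℕ, w.length = n ∧ (∀ i ∈ w, 1 ≤ i ∧ i ≤ P.N) ∧
    A = P.atomOf w ∧ A.Nonempty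

/-- `Lam n` is `Λ_{n+1}` of the paper: `Λ_1 = closure (f(X \ Δ))`,
`Λ_{n+1} = closure (f(Λ_n \ Δ))`. -/
def Lam (P : PCIM) : ℕ → Set ℝ
  | 0 => closure (P.f '' (P.X \ P.Δ))
  | n + 1 => closure (P.f '' (P.Lam n \ P.Δ))

/-- The attractor `Λ = ⋂_{n ≥ 1} Λ_n`. -/
def attractor : Set ℝ := ⋂ n : ℕ, P.Lam n

/-- `c i ∈ Δ_lr(x)`: the boundary point `c i` is left-right recurrently visited by the
orbit of `x`. -/
def lrVisited (x : ℝ) (i : ℕ) : Prop :=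
  1 ≤ i ∧ i < P.N ∧
  ∃ l r : ℕ → ℕ, StrictMono l ∧ StrictMono r ∧
    (∀ j, P.f^[l j] x ∈ P.piece i) ∧ (∀ j, P.f^[r j] x ∈ P.piece (i + 1)) ∧
    Filter.Tendsto (fun j => P.f^[l j] x) Filter.atTop (nhds (P.c i)) ∧
    Filter.Tendsto (fun j => P.f^[r j] x) Filter.atTop (nhds (P.c i))

/-- `c i ∈ Δ_lr`: `c i` is left-right recurrently visited by the orbit of some point
of `X̃`. -/
def inΔlr (i : ℕ) : Prop := ∃ x ∈ P.Xt, P.lrVisited x i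

/-- The set `Δ_lr ⊆ Δ`. -/
def ΔlrSet : Set ℝ := {y | ∃ i, P.inΔlr i ∧ y = P.c i}

/-- The relation `∼⁺` on `Δ_lr`: `c_i ∼⁺ c_j` iff `c_i = c_j` or
(`c_i ∈ Δ_lr(d_j^+)` and `c_j ∈ Δ_lr(d_i^+)`). -/
def simP (a b : ℝ) : Prop :=
  a = b ∨ ∃ i j, P.inΔlr i ∧ P.inΔlr j ∧ a = P.c i ∧ b = P.c j ∧
    P.lrVisited (P.dplus j) i ∧ P.lrVisited (P.dplus i) j

/-- The relation `≼⁺` (on representatives): `[c_i] ≼⁺ [c_j]` iff `[c_i] = [c_j]` or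
`c_i ∈ Δ_lr(d_j^+)`. -/
def preP (a b : ℝ) : Prop :=
  P.simP a b ∨ ∃ i j, P.inΔlr i ∧ P.inΔlr j ∧ a = P.c i ∧ b = P.c j ∧
    P.lrVisited (P.dplus j) i

/-- `[c i]` is a minimal class for the partial order `≼⁺`. -/
def MinimalClass (i : ℕ) : Prop :=
  P.inΔlr i ∧ ∀ j, P.inΔlr j → P.preP (P.c j) (P.c i) → P.simP (P.c j) (P.c i)

/-- `f` is injective on each contraction piece. -/
def InjPieces : Prop := ∀ i, 1 ≤ i → i ≤ P.N → Set.InjOn P.f (P.piece i)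

/-- `f` is (strictly) increasing on each contraction piece. -/
def IncrPieces : Prop := ∀ i, 1 ≤ i → i ≤ P.N → StrictMonoOn P.f (P.piece i)

/-- `x` is a periodic point of `f`. -/
def IsPeriodic (x : ℝ) : Prop := ∃ p : ℕ, 1 ≤ p ∧ P.f^[p] x = x

/-- `η` is the itinerary of `x`: `f^[n] x ∈ X_{η n}` for all `n`. -/
def IsItinerary (x : ℝ) (η : ℕ → ℕ) : Prop :=
  ∀ n, 1 ≤ η n ∧ η n ≤ P.N ∧ P.f^[n] x ∈ P.piece (η n)

end PCIM

/-- The word of length `n` of the sequence `η` starting at position `t`. -/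
def wordAt (η : ℕ → ℕ) (t n : ℕ) : List ℕ := (List.range n).map fun m => η (t + m)

/-- The complexity function of the sequence `η`: the number of distinct words of
length `n` occurring in `η`. -/
noncomputable def complexity (η : ℕ → ℕ) (n : ℕ) : ℕ := Set.ncard {w : List ℕ | ∃ t, w = wordAt η t n}

section Aux

open Filter Topology Set

private lemma squeeze_lip {u g : ℕ → ℝ} {y a L : ℝ}
    (hlim : Filter.Tendsto u Filter.atTop (nhds y))
    (h : ∀ᶠ n in Filter.atTop, |g n - a| ≤ L * |u n - y|) :
    Filter.Tendsto g Filter.atTop (nhds a) := by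
  have h1 : Filter.Tendsto (fun n => |u n - y|) Filter.atTop (nhds 0) := by
    have := tendsto_iff_dist_tendsto_zero.mp hlim
    simpa [Real.dist_eq] using this
  have h2 : Filter.Tendsto (fun n => L * |u n - y|) Filter.atTop (nhds (L * 0)) :=
    h1.const_mul L
  rw [mul_zero] at h2
  have h3 := squeeze_zero' (Filter.Eventually.of_forall fun n => abs_nonneg _) h h2
  rw [tendsto_iff_dist_tendsto_zero]
  simpa [Real.dist_eq] using h3

namespace PCIM

variable (P : PCIM)

lemma mem_omega_iff (x y : ℝ) :
    y ∈ P.omega x ↔ ∀ ε > (0:ℝ), ∀ n : ℕ, ∃ m, n ≤ m ∧ |P.f^[m] x - y| < ε := by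
  constructor
  · rintro ⟨φ, hφ, hconv⟩ ε hε n
    obtain ⟨J, hJ⟩ := Metric.tendsto_atTop.mp hconv ε hε
    refine ⟨φ (max J n), le_trans (le_max_right J n) hφ.le_apply, ?_⟩
    have := hJ (max J n) (le_max_left _ _)
    rwa [Real.dist_eq] at this
  · intro h
    have hfreq : ∀ n : ℕ, ∃ᶠ k in Filter.atTop, |P.f^[k] x - y| < 1/(n+1) := by
      intro n
      rw [Filter.frequently_atTop]
      intro a
      obtain ⟨m, hm, hlt⟩ := h (1/(n+1)) (by positivity) a
      exact ⟨m, hm, hlt⟩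
    obtain ⟨φ, hφ, hP⟩ := Filter.extraction_forall_of_frequently hfreq
    refine ⟨φ, hφ, ?_⟩
    rw [tendsto_iff_dist_tendsto_zero]
    refine squeeze_zero (fun n => dist_nonneg) (fun n => ?_)
      tendsto_one_div_add_atTop_nhds_zero_nat
    rw [Real.dist_eq]
    exact (hP n).le

lemma omega_isClosed (x : ℝ) : IsClosed (P.omega x) := by
  rw [← closure_eq_iff_isClosed]
  refine Set.Subset.antisymm ?_ subset_closure
  intro y hy
  rw [P.mem_omega_iff]
  intro ε hε n
  obtain ⟨z, hz, hdist⟩ := Metric.mem_closure_iff.mp hy (ε/2) (by positivity)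
  obtain ⟨m, hm, h2⟩ := (P.mem_omega_iff x z).mp hz (ε/2) (by positivity) n
  refine ⟨m, hm, ?_⟩
  have h3 : |P.f^[m] x - y| ≤ |P.f^[m] x - z| + |z - y| := abs_sub_le _ _ _
  have h4 : |z - y| < ε/2 := by rwa [abs_sub_comm, ← Real.dist_eq]
  linarith

lemma locate {y : ℝ} (hy : y ∈ P.X \ P.Δ) :
    ∃ i, 1 ≤ i ∧ i ≤ P.N ∧
      (y ∈ Set.Ioo (P.c (i-1)) (P.c i) ∨ (i = 1 ∧ y = P.c 0) ∨ (i = P.N ∧ y = P.c P.N)) := by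
  obtain ⟨⟨hy0, hyN⟩, hyΔ⟩ := hy
  by_cases h0 : y = P.c 0
  · exact ⟨1, le_refl 1, le_trans one_le_two P.hN, Or.inr (Or.inl ⟨rfl, h0⟩)⟩
  by_cases hNN : y = P.c P.N
  · exact ⟨P.N, le_trans one_le_two P.hN, le_refl _, Or.inr (Or.inr ⟨rfl, hNN⟩)⟩
  have hy0' : P.c 0 < y := lt_of_le_of_ne hy0 (Ne.symm h0)
  have hyN' : y < P.c P.N := lt_of_le_of_ne hyN hNN
  have hex : ∃ i, i ≤ P.N ∧ y < P.c i := ⟨P.N, le_refl _, hyN'⟩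
  classical
  obtain ⟨hiN, hyi⟩ := Nat.find_spec hex
  set i := Nat.find hex with hidef
  have hipos : 1 ≤ i := by
    by_contra h
    have hi0 : i = 0 := by omega
    rw [hi0] at hyi
    exact absurd hyi (not_lt.mpr hy0'.le)
  have hprev : ¬ (i - 1 ≤ P.N ∧ y < P.c (i-1)) := Nat.find_min hex (by omega)
  have hle : P.c (i-1) ≤ y := by
    by_contra h
    exact hprev ⟨by omega, not_le.mp h⟩
  have hlt : P.c (i-1) < y := by
    rcases lt_or_eq_of_le hle with h | h
    · exact h
    · exfalso
      have h1 : i - 1 ≠ 0 := by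
        intro h'
        rw [h'] at h
        exact h0 h.symm
      have h2 : i - 1 < P.N := by omega
      exact hyΔ ⟨i-1, by omega, h2, h.symm⟩
  exact ⟨i, hipos, hiN, Or.inl ⟨hlt, hyi⟩⟩

lemma tendsto_f_of_tendsto {y : ℝ} (hy : y ∈ P.X \ P.Δ)
    {u : ℕ → ℝ} (hu : ∀ n, u n ∈ P.X) (hlim : Filter.Tendsto u Filter.atTop (nhds y)) :
    Filter.Tendsto (fun n => P.f (u n)) Filter.atTop (nhds (P.f y)) := by
  apply squeeze_lip hlim (L := P.lam)
  obtain ⟨i, hi1, hiN, hcase⟩ := P.locate hy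
  rcases hcase with hIoo | ⟨_, hy0⟩ | ⟨_, hyN⟩
  · have hev : ∀ᶠ n in Filter.atTop, u n ∈ Set.Ioo (P.c (i-1)) (P.c i) :=
      hlim.eventually (isOpen_Ioo.eventually_mem hIoo)
    filter_upwards [hev] with n hn
    rw [← P.hfe_eq i hi1 hiN (u n) hn, ← P.hfe_eq i hi1 hiN y hIoo]
    exact P.hfe_lip i hi1 hiN (u n) (Set.mem_Icc_of_Ioo hn) y (Set.mem_Icc_of_Ioo hIoo)
  · subst hy0
    have h1N : (1:ℕ) ≤ P.N := by omega
    have hc01 : P.c 0 < P.c 1 :=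
      P.hc (Set.mem_Iic.mpr (by omega)) (Set.mem_Iic.mpr h1N) zero_lt_one
    have hev : ∀ᶠ n in Filter.atTop, u n < P.c 1 := hlim.eventually_lt_const hc01
    filter_upwards [hev] with n hn
    have hu' : u n ∈ Set.Icc (P.c 0) (P.c 1) := ⟨(hu n).1, hn.le⟩
    have hfu : P.f (u n) = P.fe 1 (u n) := by
      rcases eq_or_lt_of_le (hu n).1 with h | h
      · rw [← h]; exact P.hfe_left.symm
      · exact (P.hfe_eq 1 le_rfl h1N (u n) ⟨h, hn⟩).symm
    rw [hfu, ← P.hfe_left]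
    exact P.hfe_lip 1 le_rfl h1N (u n) hu' (P.c 0) (Set.left_mem_Icc.mpr hc01.le)
  · subst hyN
    have h1N : (1:ℕ) ≤ P.N := by omega
    have hcN : P.c (P.N - 1) < P.c P.N :=
      P.hc (Set.mem_Iic.mpr (by omega)) (Set.mem_Iic.mpr le_rfl) (by omega)
    have hev : ∀ᶠ n in Filter.atTop, P.c (P.N - 1) < u n := hlim.eventually_const_lt hcN
    filter_upwards [hev] with n hn
    have hu' : u n ∈ Set.Icc (P.c (P.N - 1)) (P.c P.N) := ⟨hn.le, (hu n).2⟩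
    have hfu : P.f (u n) = P.fe P.N (u n) := by
      rcases eq_or_lt_of_le (hu n).2 with h | h
      · rw [h]; exact P.hfe_right.symm
      · exact (P.hfe_eq P.N h1N le_rfl (u n) ⟨hn, h⟩).symm
    rw [hfu, ← P.hfe_right]
    exact P.hfe_lip P.N h1N le_rfl (u n) hu' (P.c P.N) (Set.right_mem_Icc.mpr hcN.le)

lemma tendsto_dminus {i : ℕ} (h1 : 1 ≤ i) (h2 : i < P.N)
    {u : ℕ → ℝ} (hu : ∀ n, u n ∈ P.piece i)
    (hlim : Filter.Tendsto u Filter.atTop (nhds (P.c i))) :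
    Filter.Tendsto (fun n => P.f (u n)) Filter.atTop (nhds (P.dminus i)) := by
  apply squeeze_lip hlim (L := P.lam)
  have h0i : P.c 0 < P.c i :=
    P.hc (Set.mem_Iic.mpr (by omega)) (Set.mem_Iic.mpr (by omega)) (by omega)
  have hev : ∀ᶠ n in Filter.atTop, P.c 0 < u n := hlim.eventually_const_lt h0i
  filter_upwards [hev] with n hn
  have hIoo : u n ∈ Set.Ioo (P.c (i-1)) (P.c i) := by
    rcases hu n with (h | h) | h
    · exact h
    · split_ifs at h with hif
      · rw [Set.mem_singleton_iff] at h
        exact absurd (h ▸ hn) (lt_irrefl _)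
      · exact absurd h (Set.notMem_empty _)
    · split_ifs at h with hif
      · omega
      · exact absurd h (Set.notMem_empty _)
  have hci : P.c i ∈ Set.Icc (P.c (i-1)) (P.c i) :=
    Set.right_mem_Icc.mpr (hIoo.1.trans hIoo.2).le
  rw [show P.f (u n) = P.fe i (u n) from (P.hfe_eq i h1 (by omega) (u n) hIoo).symm]
  exact P.hfe_lip i h1 (by omega) (u n) (Set.mem_Icc_of_Ioo hIoo) (P.c i) hci

lemma tendsto_dplus {i : ℕ} (h1 : 1 ≤ i) (h2 : i < P.N)
    {u : ℕ → ℝ} (hu : ∀ n, u n ∈ P.piece (i+1))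
    (hlim : Filter.Tendsto u Filter.atTop (nhds (P.c i))) :
    Filter.Tendsto (fun n => P.f (u n)) Filter.atTop (nhds (P.dplus i)) := by
  apply squeeze_lip hlim (L := P.lam)
  have hiN : P.c i < P.c P.N :=
    P.hc (Set.mem_Iic.mpr (by omega)) (Set.mem_Iic.mpr le_rfl) h2
  have hev : ∀ᶠ n in Filter.atTop, u n < P.c P.N := hlim.eventually_lt_const hiN
  filter_upwards [hev] with n hn
  have hIoo : u n ∈ Set.Ioo (P.c i) (P.c (i+1)) := by
    rcases hu n with (h | h) | h
    · exact h
    · split_ifs at h with hif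
      · omega
      · exact absurd h (Set.notMem_empty _)
    · split_ifs at h with hif
      · rw [Set.mem_singleton_iff] at h
        rw [h] at hn
        exact absurd hn (lt_irrefl _)
      · exact absurd h (Set.notMem_empty _)
  have hci : P.c i ∈ Set.Icc (P.c i) (P.c (i+1)) :=
    Set.left_mem_Icc.mpr (hIoo.1.trans hIoo.2).le
  rw [show P.f (u n) = P.fe (i+1) (u n) from
    (P.hfe_eq (i+1) (by omega) (by omega) (u n) hIoo).symm]
  exact P.hfe_lip (i+1) (by omega) (by omega) (u n) (Set.mem_Icc_of_Ioo hIoo) (P.c i) hci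

lemma iterate_mem_omega {x d : ℝ} (hx : x ∈ P.Xt) (hd : d ∈ P.Xt)
    {σ : ℕ → ℕ} (hσ : StrictMono σ)
    (hconv : Filter.Tendsto (fun j => P.f^[σ j] x) Filter.atTop (nhds d)) (n : ℕ) :
    P.f^[n] d ∈ P.omega x := by
  have main : ∀ m, Filter.Tendsto (fun j => P.f^[σ j + m] x) Filter.atTop
      (nhds (P.f^[m] d)) := by
    intro m
    induction m with
    | zero => simpa using hconv
    | succ m ih =>
      have h := P.tendsto_f_of_tendsto (hd m) (fun j => (hx (σ j + m)).1) ih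
      simpa only [← add_assoc, Function.iterate_succ_apply'] using h
  exact ⟨fun j => σ j + n, fun a b h => Nat.add_lt_add_right (hσ h) n, main n⟩

end PCIM

end Aux

/-- If `D ⊆ X̃`, `x ∈ X̃` and `c i ∈ Δ_lr(x)`, then `c i`, `d_i^+`, `d_i^-` belong to
`ω(x)`, and the closures of the orbits of `d_i^-` and `d_i^+` are contained in `ω(x)`. -/
theorem stmt8 (P : PCIM) (hD : P.D ⊆ P.Xt) (x : ℝ) (hx : x ∈ P.Xt)
    (i : ℕ) (hi : P.lrVisited x i) :
    P.c i ∈ P.omega x ∧ P.dplus i ∈ P.omega x ∧ P.dminus i ∈ P.omega x ∧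
      closure (P.orbit (P.dminus i)) ∪ closure (P.orbit (P.dplus i)) ⊆ P.omega x := by
  obtain ⟨hi1, hiN, l, r, hl, hr, hlp, hrp, hlc, hrc⟩ := hi
  have hdm : P.dminus i ∈ P.Xt :=
    hD (Set.mem_union_left _ (Set.mem_union_left _ ⟨i, hi1, hiN, rfl⟩))
  have hdp : P.dplus i ∈ P.Xt :=
    hD (Set.mem_union_left _ (Set.mem_union_right _ ⟨i, hi1, hiN, rfl⟩))
  have hl1 : StrictMono fun j => l j + 1 := fun a b h => Nat.add_lt_add_right (hl h) 1
  have hr1 : StrictMono fun j => r j + 1 := fun a b h => Nat.add_lt_add_right (hr h) 1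
  have hconvm : Filter.Tendsto (fun j => P.f^[l j + 1] x) Filter.atTop (nhds (P.dminus i)) := by
    have h := P.tendsto_dminus hi1 hiN hlp hlc
    simpa [← Function.iterate_succ_apply' P.f] using h
  have hconvp : Filter.Tendsto (fun j => P.f^[r j + 1] x) Filter.atTop (nhds (P.dplus i)) := by
    have h := P.tendsto_dplus hi1 hiN hrp hrc
    simpa [← Function.iterate_succ_apply' P.f] using h
  refine ⟨⟨l, hl, hlc⟩, ⟨fun j => r j + 1, hr1, hconvp⟩, ⟨fun j => l j + 1, hl1, hconvm⟩, ?_⟩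
  intro y hy
  have hclosed := P.omega_isClosed x
  rcases hy with hy | hy
  · have hsub : P.orbit (P.dminus i) ⊆ P.omega x := by
      rintro z ⟨n, rfl⟩
      exact P.iterate_mem_omega hx hdm hl1 hconvm n
    exact (IsClosed.closure_subset_iff hclosed).mpr hsub hy
  · have hsub : P.orbit (P.dplus i) ⊆ P.omega x := by
      rintro z ⟨n, rfl⟩
      exact P.iterate_mem_omega hx hdp hr1 hconvp n
    exact (IsClosed.closure_subset_iff hclosed).mpr hsub hy
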